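/- arXiv:1506.08280 — 3 statements merged into one kernel-verified Lean document; each statement's English description precedes it below -/
import Mathlib

section
/- Suppose f : X → Y is a (λ₁,μ₁)-large scale Lipschitz function, where X is a δ-hyperbolic geodesic space (so that every point on a geodesic x₁y lies within distance δ of the union of geodesics x₀y ∪ x₁x₀ for any x₀). If f is (λ₂,μ₂)-radial with respect to some point x₀ ∈ X, then for every x₁ ∈ X, f is radial with respect to x₁; explicitly, for all x,y lying on a geodesic starting at x₁ one has λ₂·d(x,y) − μ ≤ d(f(x),f(y)), where μ is a constant depending only on λ₁, μ₁, λ₂, μ₂, δ and d(x₀,x₁). -/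
open Filter Metric Set

noncomputable section

namespace Gromov

variable {X : Type*} [MetricSpace X] {Y : Type*} [MetricSpace Y]

/-- The Gromov product `(x,y)_a = (d(x,a)+d(y,a)-d(x,y))/2`. -/
def gp (a x y : X) : ℝ := (dist x a + dist y a - dist x y) / 2

/-- Gromov `δ`-hyperbolicity via the `δ/4`-inequality. -/
def IsDeltaHyperbolic (X : Type*) [MetricSpace X] (δ : ℝ) : Prop :=
  ∀ x y z w : X, gp w x y ≥ min (gp w x z) (gp w z y) - δ / 4

/-- `γ` is a geodesic starting at `x`, parametrized by arclength on `[0, M]`. -/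
def IsGeodesicOn (γ : ℝ → X) (x : X) (M : ℝ) : Prop :=
  γ 0 = x ∧ ∀ s ∈ Icc (0:ℝ) M, ∀ t ∈ Icc (0:ℝ) M, dist (γ s) (γ t) = |s - t|

/-- Every two points are joined by a geodesic. -/
def IsGeodesicSpace (X : Type*) [MetricSpace X] : Prop :=
  ∀ x y : X, ∃ γ : ℝ → X, IsGeodesicOn γ x (dist x y) ∧ γ (dist x y) = y

/-- An infinite geodesic ray emanating from `x`. -/
def IsRay (γ : ℝ → X) (x : X) : Prop :=
  γ 0 = x ∧ ∀ s ∈ Ici (0:ℝ), ∀ t ∈ Ici (0:ℝ), dist (γ s) (γ t) = |s - t|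

/-- `f` is `(l, μ)`-large scale Lipschitz. -/
def IsLSL (f : X → Y) (l μ : ℝ) : Prop :=
  ∀ x y : X, dist (f x) (f y) ≤ l * dist x y + μ

/-- `f` is large scale Lipschitz. -/
def LSL (f : X → Y) : Prop := ∃ l μ : ℝ, 0 < l ∧ 0 < μ ∧ IsLSL f l μ

/-- The `(l2, μ2)`-radial lower bound condition with respect to `x₀`:
on every finite geodesic emanating from `x₀`, `l2·d(x,y) - μ2 ≤ d(f(x),f(y))`. -/
def IsRadialWith (f : X → Y) (x₀ : X) (l2 μ2 : ℝ) : Prop :=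
  ∀ M, 0 ≤ M → ∀ γ : ℝ → X, IsGeodesicOn γ x₀ M →
    ∀ s ∈ Icc (0:ℝ) M, ∀ t ∈ Icc (0:ℝ) M,
      l2 * dist (γ s) (γ t) - μ2 ≤ dist (f (γ s)) (f (γ t))

/-- `f` is a radial function with respect to `x₀`. -/
def Radial (f : X → Y) (x₀ : X) : Prop :=
  LSL f ∧ ∃ l2 μ2 : ℝ, 0 < l2 ∧ 0 < μ2 ∧ IsRadialWith f x₀ l2 μ2

/-- `f` is visual: for some basepoint `a`, `(x_n,y_n)_a → ∞` implies
`(f(x_n),f(y_n))_{f(a)} → ∞`. -/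
def VisualFn (f : X → Y) : Prop :=
  ∃ a : X, ∀ x y : ℕ → X,
    Tendsto (fun n => gp a (x n) (y n)) atTop atTop →
    Tendsto (fun n => gp (f a) (f (x n)) (f (y n))) atTop atTop

/-- `liminf_{i,j→∞} (x_i,x_j)_a = ∞`: the sequence converges to infinity. -/
def ConvSeq (a : X) (x : ℕ → X) : Prop :=
  Tendsto (fun p : ℕ × ℕ => gp a (x p.1) (x p.2)) atTop atTop

/-- `liminf_{i,j→∞} (x_i,y_j)_a = ∞`: the two sequences are equivalent. -/
def SeqEquiv (a : X) (x y : ℕ → X) : Prop :=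
  Tendsto (fun p : ℕ × ℕ => gp a (x p.1) (y p.2)) atTop atTop

def BSeq (a : X) : Type _ := {x : ℕ → X // ConvSeq a x}

/-- The sequential boundary `∂X` with basepoint `a`. -/
def Boundary (a : X) : Type _ := Quot (fun x y : BSeq a => SeqEquiv a x.1 y.1)

/-- The boundary point represented by a sequence. -/
def bpt (a : X) (x : ℕ → X) (hx : ConvSeq a x) : Boundary a :=
  Quot.mk _ ⟨x, hx⟩

/-- `liminf_{i,j→∞} (x_i,y_j)_a` as an extended real. -/
def gpSeqs (a : X) (x y : ℕ → X) : EReal :=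
  liminf (fun p : ℕ × ℕ => ((gp a (x p.1) (y p.2)) : EReal)) atTop

/-- The basic neighborhood `U(p,r)` in the sequential boundary. -/
def U (a : X) (p : Boundary a) (r : ℝ) : Set (Boundary a) :=
  {q | ∃ (x y : ℕ → X) (hx : ConvSeq a x) (hy : ConvSeq a y),
    bpt a x hx = p ∧ bpt a y hy = q ∧ (r : EReal) ≤ gpSeqs a x y}

instance (a : X) : TopologicalSpace (Boundary a) :=
  TopologicalSpace.generateFrom {s | ∃ p r, 0 < r ∧ s = U a p r}

/-- The union `X ∪ ∂X`. -/
def Comp (a : X) : Type _ := X ⊕ Boundary a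

def Comp.inl {a : X} (x : X) : Comp a := Sum.inl x
def Comp.inr {a : X} (p : Boundary a) : Comp a := Sum.inr p

/-- The extension of `U(p,r)` to `X ∪ ∂X`. -/
def UFull (a : X) (p : Boundary a) (r : ℝ) : Set (Comp a) :=
  {z : X ⊕ Boundary a | Sum.elim
    (fun x : X => ∃ (s : ℕ → X) (hs : ConvSeq a s), bpt a s hs = p ∧
      (r : EReal) ≤ liminf (fun i : ℕ => ((gp a (s i) x) : EReal)) atTop)
    (fun q : Boundary a => q ∈ U a p r) z}

instance (a : X) : TopologicalSpace (Comp a) :=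
  TopologicalSpace.generateFrom
    ({s | ∃ u : Set X, IsOpen u ∧ s = Comp.inl '' u} ∪
     {s | ∃ p r, 0 < r ∧ s = UFull a p r})

/-- The Gromov product of two boundary points:
`(p,q)_a = inf liminf_{i→∞} (x_i,y_i)_a` over representatives. -/
def gpBoundary (a : X) (p q : Boundary a) : EReal :=
  sInf {e : EReal | ∃ (x y : ℕ → X) (hx : ConvSeq a x) (hy : ConvSeq a y),
    bpt a x hx = p ∧ bpt a y hy = q ∧
    e = liminf (fun i : ℕ => ((gp a (x i) (y i)) : EReal)) atTop}

/-- `K^{-e}` for an extended real exponent `e` (with `K^{-∞} = 0`). -/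
def negPow (K : ℝ) (e : EReal) : ℝ :=
  if e = ⊤ then 0 else if e = ⊥ then 0 else Real.rpow K (-(e.toReal))

/-- `d` is a visual metric on `∂X` with parameters `K, C > 1`. -/
def IsVisualMetric (a : X) (d : Boundary a → Boundary a → ℝ) (K C : ℝ) : Prop :=
  1 < K ∧ 1 < C ∧ ∀ p q : Boundary a,
    negPow K (gpBoundary a p q) / C ≤ d p q ∧ d p q ≤ C * negPow K (gpBoundary a p q)

/-- A map between sets with distinguished distance functions is Hölder. -/
def IsHolder {A B : Type*} (dA : A → A → ℝ) (dB : B → B → ℝ) (g : A → B) : Prop :=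
  ∃ L α : ℝ, 0 < L ∧ 0 < α ∧ ∀ p q : A, dB (g p) (g q) ≤ L * Real.rpow (dA p q) α

/-- `(ξ₁,ξ₂)_a = liminf_{t→∞} (ξ₁(t),ξ₂(t))_a` for rays. -/
def gpRays (a : X) (ξ₁ ξ₂ : ℝ → X) : EReal :=
  liminf (fun t : ℝ => ((gp a (ξ₁ t) (ξ₂ t)) : EReal)) atTop

/-- The geodesic ray `ξ` represents the boundary point `p`. -/
def RayRepresents (a : X) (ξ : ℝ → X) (p : Boundary a) : Prop :=
  ∃ h : ConvSeq a (fun n : ℕ => ξ n), bpt a (fun n : ℕ => ξ n) h = p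

/-- `(x,ξ)_a = liminf_{n→∞} (x,ξ(n))_a`. -/
def gpPointRay (a x : X) (ξ : ℝ → X) : ℝ :=
  liminf (fun n : ℕ => gp a x (ξ n)) atTop

/-- `X` is a visual hyperbolic space with basepoint `a` and constant `D`. -/
def IsVisualSpace (a : X) (D : ℝ) : Prop :=
  ∀ x : X, ∃ ξ : ℝ → X, IsRay ξ a ∧ gpPointRay a x ξ > dist x a - D

/-- A maximal finite geodesic from `a`: it admits no proper geodesic extension. -/
def MaximalGeodesic (ζ : ℝ → X) (a : X) (M : ℝ) : Prop :=
  IsGeodesicOn ζ a M ∧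
    ¬ ∃ (M' : ℝ) (ζ' : ℝ → X), M < M' ∧ IsGeodesicOn ζ' a M' ∧
      ∀ t ∈ Icc (0:ℝ) M, ζ' t = ζ t

/-- `f : X → Y` is a radial extension with parameter `A` of `g : ∂X → ∂Y`
(`D` being the visuality constant of `X`). -/
def IsRadialExtension (a : X) (b : Y) (g : Boundary a → Boundary b)
    (A D : ℝ) (f : X → Y) : Prop :=
  f a = b ∧
  ∀ x : X, x ≠ a →
    ((∃ (ξ : ℝ → X) (t : ℝ), IsRay ξ a ∧ 0 ≤ t ∧ ξ t = x) →
      ∃ (ξ : ℝ → X) (t : ℝ) (η : ℝ → Y), IsRay ξ a ∧ 0 ≤ t ∧ ξ t = x ∧ IsRay η b ∧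
        (∃ p : Boundary a, RayRepresents a ξ p ∧ RayRepresents b η (g p)) ∧
        f x = η (A * t)) ∧
    ((¬ ∃ (ξ : ℝ → X) (t : ℝ), IsRay ξ a ∧ 0 ≤ t ∧ ξ t = x) →
      ∃ (M t : ℝ) (ζ ξ : ℝ → X) (η : ℝ → Y),
        MaximalGeodesic ζ a M ∧ t ∈ Icc (0:ℝ) M ∧ ζ t = x ∧
        IsRay ξ a ∧ gpPointRay a (ζ M) ξ > dist (ζ M) a - D ∧ IsRay η b ∧
        (∃ p : Boundary a, RayRepresents a ξ p ∧ RayRepresents b η (g p)) ∧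
        f x = η (A * t))

/-- `f` is coarsely surjective. -/
def CoarselySurjective (f : X → Y) : Prop :=
  ∃ S : ℝ, 0 < S ∧ ∀ y : Y, ∃ x : X, dist y (f x) ≤ S

/-- `f` is bornologous (coarse). -/
def Bornologous (f : X → Y) : Prop :=
  ∀ R : ℝ, 0 < R → ∃ S : ℝ, 0 < S ∧ ∀ x x' : X, dist x x' ≤ R → dist (f x) (f x') ≤ S

/-- `f` is a coarse embedding. -/
def CoarseEmbedding (f : X → Y) : Prop :=
  Bornologous f ∧
    ∀ R : ℝ, 0 < R → ∃ S : ℝ, 0 < S ∧ ∀ x x' : X, dist (f x) (f x') ≤ R → dist x x' ≤ S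

/-- `f` is coarsely `n`-to-1. -/
def CoarselyNto1 (f : X → Y) (n : ℕ) : Prop :=
  ∀ R : ℝ, 0 < R → ∃ S : ℝ, 0 < S ∧ ∀ A : Set Y, EMetric.diam A < ENNReal.ofReal R →
    ∃ B : Fin n → Set X, (f ⁻¹' A = ⋃ i, B i) ∧
      ∀ i, EMetric.diam (B i) < ENNReal.ofReal S

/-- `g : ∂X → ∂Y` is the boundary map induced by `f`, i.e. `g [(x_n)] = [(f(x_n))]`. -/
def InducedBoundaryMap (a : X) (f : X → Y) (g : Boundary a → Boundary (f a)) : Prop :=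
  ∀ (x : ℕ → X) (hx : ConvSeq a x) (hfx : ConvSeq (f a) (f ∘ x)),
    g (bpt a x hx) = bpt (f a) (f ∘ x) hfx

/-- `g` is (at most) `n`-to-1. -/
def NTo1 {A B : Type*} (g : A → B) (n : ℕ) : Prop :=
  ∀ b : B, ∃ s : Finset A, s.card ≤ n ∧ ∀ a : A, g a = b → a ∈ s

/-- Covering dimension at most `n`: every open cover admits an open refinement
of multiplicity at most `n+1`. -/
def CovDimLE (Z : Type*) [TopologicalSpace Z] (n : ℕ) : Prop :=
  ∀ 𝒰 : Set (Set Z), (∀ u ∈ 𝒰, IsOpen u) → ⋃₀ 𝒰 = univ →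
    ∃ 𝒱 : Set (Set Z), (∀ v ∈ 𝒱, IsOpen v) ∧ ⋃₀ 𝒱 = univ ∧
      (∀ v ∈ 𝒱, ∃ u ∈ 𝒰, v ⊆ u) ∧
      ∀ z : Z, {v ∈ 𝒱 | z ∈ v}.Finite ∧ {v ∈ 𝒱 | z ∈ v}.ncard ≤ n + 1

/-- `c_{f,n}(r)`: the supremum of numbers `B` such that there exist `n+1` points
with mutual Gromov products `< r` whose images have mutual Gromov products `≥ B`. -/
def cfn (a : X) (b : Y) (f : X → Y) (n : ℕ) (r : ℝ) : EReal :=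
  sSup {e : EReal | ∃ (B : ℝ) (x : Fin (n + 1) → X), e = (B : EReal) ∧
    (∀ i j, i ≠ j → gp a (x i) (x j) < r) ∧
    (∀ i j, i ≠ j → B ≤ gp b (f (x i)) (f (x j)))}

/-- a `(λ₂,μ₂)`-radial function on a δ-hyperbolic (thin-triangles)
geodesic space is radial with respect to any other basepoint `x₁`, with a
constant depending only on the data and `d(x₀,x₁)`. -/
theorem stmt3 {X : Type*} [MetricSpace X] {Y : Type*} [MetricSpace Y]
    (δ : ℝ) (hδ : 0 ≤ δ) (hgeo : IsGeodesicSpace X)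
    (hthin : ∀ (u v w : X) (γ γ' γ'' : ℝ → X),
      IsGeodesicOn γ u (dist u v) → γ (dist u v) = v →
      IsGeodesicOn γ' w (dist w v) → γ' (dist w v) = v →
      IsGeodesicOn γ'' u (dist u w) → γ'' (dist u w) = w →
      ∀ t ∈ Icc (0:ℝ) (dist u v),
        ∃ z ∈ γ' '' Icc (0:ℝ) (dist w v) ∪ γ'' '' Icc (0:ℝ) (dist u w),
          dist (γ t) z ≤ δ)
    (f : X → Y) (l1 μ1 l2 μ2 : ℝ) (hl1 : 0 < l1) (hμ1 : 0 < μ1)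
    (hl2 : 0 < l2) (hμ2 : 0 < μ2)
    (hf : IsLSL f l1 μ1) (x₀ : X) (hrad : IsRadialWith f x₀ l2 μ2) :
    ∃ μ : ℝ → ℝ, ∀ x₁ : X, IsRadialWith f x₁ l2 (μ (dist x₀ x₁)) := by
  refine ⟨fun D => l2 * (δ + D) + l1 * (δ + D) + μ1 + μ2, ?_⟩
  intro x₁ M hM γ hγ s hs t ht
  set D := dist x₀ x₁ with hDdef
  have hD : 0 ≤ D := dist_nonneg
  have key : ∀ s ∈ Icc (0:ℝ) M, ∀ t ∈ Icc (0:ℝ) M, s ≤ t →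
      l2 * dist (γ s) (γ t) - (l2 * (δ + D) + l1 * (δ + D) + μ1 + μ2)
        ≤ dist (f (γ s)) (f (γ t)) := by
    intro s hs t ht hst
    have hγ0 : γ 0 = x₁ := hγ.1
    have hdist := hγ.2
    have hdxt : dist x₁ (γ t) = t := by
      rw [← hγ0, hdist 0 ⟨le_refl 0, hM⟩ t ht]
      rw [abs_of_nonpos (by linarith [ht.1])]; ring
    have hγt : IsGeodesicOn γ x₁ t :=
      ⟨hγ0, fun a ha b hb => hdist a ⟨ha.1, ha.2.trans ht.2⟩ b ⟨hb.1, hb.2.trans ht.2⟩⟩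
    obtain ⟨γ', hγ'g, hγ'end⟩ := hgeo x₀ (γ t)
    obtain ⟨γ'', hγ''g, hγ''end⟩ := hgeo x₁ x₀
    set L := dist x₀ (γ t) with hLdef
    have hL : 0 ≤ L := dist_nonneg
    obtain ⟨z, hz, hzd⟩ := hthin x₁ (γ t) x₀ γ γ' γ''
      (by rw [hdxt]; exact hγt) (by rw [hdxt]) hγ'g hγ'end hγ''g hγ''end
      s (by rw [hdxt]; exact ⟨hs.1, hst⟩)
    have hst' : dist (γ s) (γ t) = t - s := by
      rw [hdist s hs t ht, abs_of_nonpos (by linarith)]; ring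
    have hfz : dist (f (γ s)) (f z) ≤ l1 * δ + μ1 := by
      have := hf (γ s) z
      nlinarith [mul_le_mul_of_nonneg_left hzd hl1.le]
    have htriY : dist (f z) (f (γ t)) ≤ dist (f z) (f (γ s)) + dist (f (γ s)) (f (γ t)) :=
      dist_triangle _ _ _
    rcases hz with hz | hz
    · -- z on geodesic from x₀ to γ t
      obtain ⟨r, hr, hzr⟩ := hz
      have hradz : l2 * dist z (γ t) - μ2 ≤ dist (f z) (f (γ t)) := by
        have := hrad L hL γ' hγ'g r hr L ⟨hL, le_refl L⟩
        rw [hγ'end, hzr] at this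
        exact this
      have h1 : dist (γ s) (γ t) - δ ≤ dist z (γ t) := by
        have := dist_triangle (γ s) z (γ t)
        have hc : dist z (γ s) = dist (γ s) z := dist_comm _ _
        linarith
      have h2 : l2 * (dist (γ s) (γ t) - δ) ≤ l2 * dist z (γ t) :=
        mul_le_mul_of_nonneg_left h1 hl2.le
      have hc : dist (f z) (f (γ s)) = dist (f (γ s)) (f z) := dist_comm _ _
      nlinarith [mul_nonneg hl2.le hD, mul_nonneg hl1.le hD]
    · -- z on geodesic from x₁ to x₀
      obtain ⟨r, hr, hzr⟩ := hz
      have hE : dist x₁ x₀ = D := dist_comm x₁ x₀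
      have hzx0 : dist z x₀ ≤ D := by
        rw [← hzr] at *
        rw [← hγ''end]
        rw [hγ''g.2 r hr (dist x₁ x₀) ⟨dist_nonneg, le_refl _⟩]
        rw [abs_of_nonpos (by linarith [hr.2])]
        linarith [hr.1, hE]
      have hsx0 : dist (γ s) x₀ ≤ δ + D := by
        have := dist_triangle (γ s) z x₀
        linarith
      have hradx : l2 * L - μ2 ≤ dist (f x₀) (f (γ t)) := by
        have := hrad L hL γ' hγ'g 0 ⟨le_refl 0, hL⟩ L ⟨hL, le_refl L⟩
        rw [hγ'end, hγ'g.1] at this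
        have hd0 : dist x₀ (γ t) = L := rfl
        linarith [this]
      have hLlb : dist (γ s) (γ t) - (δ + D) ≤ L := by
        have := dist_triangle (γ s) x₀ (γ t)
        rw [hLdef]
        linarith
      have h2 : l2 * (dist (γ s) (γ t) - (δ + D)) ≤ l2 * L :=
        mul_le_mul_of_nonneg_left hLlb hl2.le
      have hfx0s : dist (f x₀) (f (γ s)) ≤ l1 * (δ + D) + μ1 := by
        have := hf x₀ (γ s)
        have hc : dist x₀ (γ s) = dist (γ s) x₀ := dist_comm _ _
        nlinarith [mul_le_mul_of_nonneg_left hsx0 hl1.le]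
      have htriY2 : dist (f x₀) (f (γ t)) ≤ dist (f x₀) (f (γ s)) + dist (f (γ s)) (f (γ t)) :=
        dist_triangle _ _ _
      linarith
  rcases le_total s t with h | h
  · exact key s hs t ht h
  · have hk := key t ht s hs h
    rw [dist_comm (γ t) (γ s), dist_comm (f (γ t)) (f (γ s))] at hk
    exact hk


end Gromov
end
end

section
/- Suppose f : X → Y is a (λ,μ)-large scale Lipschitz function between proper hyperbolic geodesic spaces, X is visual with basepoint a and constant D, and there exist λ₂,μ₂ > 0 so that for every infinite geodesic ray γ : [0,∞) → X with γ(0) = a one has λ₂·d(x,y) − μ₂ ≤ d(f(x),f(y)) for all x,y on the image of γ. Then f is radial with respect to a; explicitly, with μ₃ = λ₂(2D+2δ)+μ₂+λ(2D+2δ)+2μ one has λ₂·d(x,y) − μ₃ ≤ d(f(x),f(y)) for all x,y lying on any finite geodesic starting at a. -/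
open Filter Metric Set

noncomputable section

namespace Gromov

variable {X : Type*} [MetricSpace X] {Y : Type*} [MetricSpace Y]

/-- if `X` is visual and the radial lower bound holds along all
infinite geodesic rays from the basepoint, then it holds along all finite
geodesics from the basepoint, with the explicit constant
`μ₃ = λ₂(2D+2δ)+μ₂+λ(2D+2δ)+2μ`; i.e. `f` is radial. -/
theorem stmt4 {X : Type*} [MetricSpace X] [ProperSpace X]
    {Y : Type*} [MetricSpace Y] [ProperSpace Y]
    (δ : ℝ) (hX : IsDeltaHyperbolic X δ) (hY : IsDeltaHyperbolic Y δ)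
    (hgX : IsGeodesicSpace X) (hgY : IsGeodesicSpace Y)
    (f : X → Y) (l μ : ℝ) (hl : 0 < l) (hμ : 0 < μ) (hf : IsLSL f l μ)
    (a : X) (D : ℝ) (hD : 0 < D) (hvisX : IsVisualSpace a D)
    (l2 μ2 : ℝ) (hl2 : 0 < l2) (hμ2 : 0 < μ2)
    (hray : ∀ γ : ℝ → X, IsRay γ a → ∀ s ∈ Ici (0:ℝ), ∀ t ∈ Ici (0:ℝ),
      l2 * dist (γ s) (γ t) - μ2 ≤ dist (f (γ s)) (f (γ t))) :
    IsRadialWith f a l2 (l2 * (2*D + 2*δ) + μ2 + l * (2*D + 2*δ) + 2*μ) := by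
  have hδ : 0 ≤ δ := by
    have h := hX a a a a
    simp [gp, ge_iff_le] at h
    linarith
  intro M hM γ hγ s hs t ht
  obtain ⟨hγ0, hγd⟩ := hγ
  have h0M : (0:ℝ) ∈ Icc (0:ℝ) M := ⟨le_refl 0, hM⟩
  have hMM : M ∈ Icc (0:ℝ) M := ⟨hM, le_refl M⟩
  have hda : ∀ u ∈ Icc (0:ℝ) M, dist (γ u) a = u := by
    intro u hu
    have h := hγd u hu 0 h0M
    rw [hγ0] at h
    rw [h, sub_zero, abs_of_nonneg hu.1]
  have hMa : dist (γ M) a = M := hda M hMM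
  obtain ⟨ξ, hξ, hgpξ⟩ := hvisX (γ M)
  obtain ⟨hξ0, hξd⟩ := hξ
  have hξa : ∀ u : ℝ, 0 ≤ u → dist (ξ u) a = u := by
    intro u hu
    have h := hξd u hu 0 (Set.mem_Ici.mpr (le_refl 0))
    rw [hξ0] at h
    rw [h, sub_zero, abs_of_nonneg hu]
  rw [hMa] at hgpξ
  have hbdd : Filter.IsBoundedUnder (· ≥ ·) Filter.atTop
      (fun n : ℕ => gp a (γ M) (ξ n)) := by
    refine ⟨0, Filter.eventually_map.mpr (Filter.Eventually.of_forall ?_)⟩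
    intro n
    simp only [gp, ge_iff_le]
    linarith [dist_triangle (γ M) a (ξ n), dist_comm a (ξ n),
      dist_nonneg (x := γ M) (y := ξ n)]
  have hev : ∀ᶠ n : ℕ in Filter.atTop, M - D < gp a (γ M) (ξ n) :=
    Filter.eventually_lt_of_lt_liminf hgpξ hbdd
  have key : ∀ u ∈ Icc (0:ℝ) M, dist (γ u) (ξ u) ≤ 2*(u - min u (M - D)) + δ := by
    intro u hu
    have hev2 : ∀ᶠ n : ℕ in Filter.atTop, u ≤ (n:ℝ) := by
      refine Filter.eventually_atTop.2 ⟨⌈u⌉₊, fun n hn => ?_⟩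
      exact (Nat.le_ceil u).trans (by exact_mod_cast hn)
    obtain ⟨n, hn1, hn2⟩ := (hev.and hev2).exists
    have hg1 : gp a (γ u) (γ M) = u := by
      have hd := hγd u hu M hMM
      have habs : |u - M| = M - u := by
        rw [abs_of_nonpos (by linarith [hu.2])]; ring
      rw [habs] at hd
      simp only [gp, hda u hu, hMa, hd]; ring
    have hg2 : gp a (ξ n) (ξ u) = u := by
      have hd := hξd n (Set.mem_Ici.mpr (Nat.cast_nonneg n)) u (Set.mem_Ici.mpr hu.1)
      have habs : |(n:ℝ) - u| = (n:ℝ) - u := abs_of_nonneg (by linarith)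
      rw [habs] at hd
      simp only [gp, hξa n (Nat.cast_nonneg n), hξa u hu.1, hd]; ring
    have hyp1 := hX (γ u) (ξ n) (γ M) a
    have hyp2 := hX (γ u) (ξ u) (ξ n) a
    rw [hg1] at hyp1
    rw [hg2] at hyp2
    have hgpd : gp a (γ u) (ξ u) = (u + u - dist (γ u) (ξ u)) / 2 := by
      simp only [gp, hda u hu, hξa u hu.1]
    have hA : min u (M - D) - δ/4 ≤ gp a (γ u) (ξ n) := by
      have hmm : min u (M - D) ≤ min u (gp a (γ M) (ξ n)) :=
        min_le_min (le_refl u) hn1.le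
      linarith [hyp1]
    have hB : min u (M - D) - δ/4 ≤ min (gp a (γ u) (ξ n)) u :=
      le_min (by linarith) (by linarith [min_le_left u (M - D)])
    have hC : min u (M - D) - δ/2 ≤ gp a (γ u) (ξ u) := by linarith [hyp2]
    rw [hgpd] at hC
    linarith
  by_cases hcase : M - D < s ∧ M - D < t
  · -- both points close to the tip: the inequality is trivial
    have hdγ : dist (γ s) (γ t) = |s - t| := hγd s hs t ht
    have habs : |s - t| ≤ D := by
      rw [abs_le]
      exact ⟨by linarith [ht.2, hcase.1], by linarith [hs.2, hcase.2]⟩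
    have h1 : l2 * dist (γ s) (γ t) ≤ l2 * (2*D + 2*δ) := by
      apply mul_le_mul_of_nonneg_left _ hl2.le
      rw [hdγ]; linarith
    linarith [dist_nonneg (x := f (γ s)) (y := f (γ t)),
      mul_nonneg hl.le (by linarith : (0:ℝ) ≤ 2*D + 2*δ)]
  · push_neg at hcase
    have hsum : (s - min s (M - D)) + (t - min t (M - D)) ≤ D := by
      rcases le_or_gt s (M - D) with h | h
      · rw [min_eq_left h]
        rcases le_or_gt t (M - D) with h' | h'
        · rw [min_eq_left h']; linarith
        · rw [min_eq_right h'.le]; linarith [ht.2]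
      · have h' := hcase h
        rw [min_eq_left h', min_eq_right h.le]
        linarith [hs.2]
    have hks := key s hs
    have hkt := key t ht
    have hray' := hray ξ ⟨hξ0, hξd⟩ s (Set.mem_Ici.mpr hs.1) t (Set.mem_Ici.mpr ht.1)
    have hdeq : dist (ξ s) (ξ t) = dist (γ s) (γ t) := by
      rw [hξd s (Set.mem_Ici.mpr hs.1) t (Set.mem_Ici.mpr ht.1), hγd s hs t ht]
    rw [hdeq] at hray'
    have tri := dist_triangle4 (f (ξ s)) (f (γ s)) (f (γ t)) (f (ξ t))
    have b1 : dist (f (ξ s)) (f (γ s)) ≤ l * (2*(s - min s (M - D)) + δ) + μ := by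
      have h := hf (ξ s) (γ s)
      rw [dist_comm (ξ s) (γ s)] at h
      have := mul_le_mul_of_nonneg_left hks hl.le
      linarith
    have b2 : dist (f (γ t)) (f (ξ t)) ≤ l * (2*(t - min t (M - D)) + δ) + μ := by
      have h := hf (γ t) (ξ t)
      have := mul_le_mul_of_nonneg_left hkt hl.le
      linarith
    have hlsum : l * (2*(s - min s (M - D)) + δ) + l * (2*(t - min t (M - D)) + δ)
        ≤ l * (2*D + 2*δ) := by
      have : (2*(s - min s (M - D)) + δ) + (2*(t - min t (M - D)) + δ)
          ≤ 2*D + 2*δ := by linarith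
      nlinarith [hl.le]
    have hl2pos : 0 ≤ l2 * (2*D + 2*δ) :=
      mul_nonneg hl2.le (by linarith [hD.le])
    linarith

end Gromov
end
end

section
/- Suppose X and Y are proper Gromov hyperbolic geodesic spaces with basepoints a and b whose boundaries are equipped with visual metrics, g : ∂X → ∂Y is a Hölder map, and X is visual. Then there is M > 0 such that every radial extension f : X → Y of g with parameter A ≤ M is a radial function (in particular, every such f is large scale Lipschitz). -/
open Filter Metric Set

noncomputable section

namespace Gromov

variable {X : Type*} [MetricSpace X] {Y : Type*} [MetricSpace Y]

section Helpers

variable {X : Type*} [MetricSpace X] {Y : Type*} [MetricSpace Y] {δ : ℝ}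

lemma gp_nonneg (a x y : X) : 0 ≤ gp a x y := by
  have h := dist_triangle x a y
  rw [dist_comm a y] at h
  unfold gp; linarith

lemma gp_comm (a x y : X) : gp a x y = gp a y x := by
  unfold gp; rw [dist_comm x y]; ring

lemma gp_le_left (a x y : X) : gp a x y ≤ dist x a := by
  have h := dist_triangle y x a
  rw [dist_comm y x] at h
  unfold gp; linarith

lemma delta_nonneg (hX : IsDeltaHyperbolic X δ) (a : X) : 0 ≤ δ := by
  have h := hX a a a a
  have : gp a a a = 0 := by unfold gp; simp
  rw [this] at h; simp at h; linarith

lemma hyp2 (hX : IsDeltaHyperbolic X δ) (hδ : 0 ≤ δ) (w x u v y : X) :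
    min (gp w x u) (min (gp w u v) (gp w v y)) - δ/2 ≤ gp w x y := by
  have h1 := hX x y u w
  have h2 := hX u y v w
  have hm : min (gp w u v) (gp w v y) - δ/4 ≤ gp w u y := h2
  have : min (gp w x u) (min (gp w u v) (gp w v y) - δ/4) ≤ gp w x y + δ/4 := by
    refine le_trans (min_le_min (le_refl _) hm) ?_
    linarith [h1]
  have hmin : min (gp w x u) (min (gp w u v) (gp w v y)) - δ/4 ≤
      min (gp w x u) (min (gp w u v) (gp w v y) - δ/4) := by
    refine le_min ?_ ?_
    · linarith [min_le_left (gp w x u) (min (gp w u v) (gp w v y))]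
    · linarith [min_le_right (gp w x u) (min (gp w u v) (gp w v y))]
  linarith

lemma ray_dist {ξ : ℝ → X} {a : X} (hξ : IsRay ξ a) {t : ℝ} (ht : 0 ≤ t) :
    dist (ξ t) a = t := by
  have := hξ.2 t (Set.mem_Ici.2 ht) 0 (Set.mem_Ici.2 le_rfl)
  rw [hξ.1] at this
  rw [this]; rw [abs_of_nonneg (by linarith)]; ring

lemma ray_gp {ξ : ℝ → X} {a : X} (hξ : IsRay ξ a) {s t : ℝ} (hs : 0 ≤ s) (ht : 0 ≤ t) :
    gp a (ξ s) (ξ t) = min s t := by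
  have hd := hξ.2 s (Set.mem_Ici.2 hs) t (Set.mem_Ici.2 ht)
  unfold gp
  rw [ray_dist hξ hs, ray_dist hξ ht, hd]
  rcases le_total s t with h | h
  · rw [abs_of_nonpos (by linarith), min_eq_left h]; ring
  · rw [abs_of_nonneg (by linarith), min_eq_right h]; ring

lemma le_liminf_coe {f : ℕ → ℝ} {R : ℝ} (h : ∀ᶠ n in atTop, R ≤ f n) :
    (R : EReal) ≤ liminf (fun n => ((f n : ℝ) : EReal)) atTop :=
  le_liminf_of_le (by isBoundedDefault) (h.mono fun n hn => EReal.coe_le_coe_iff.2 hn)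

lemma eventually_lt_of_lt_liminf_real {f : ℕ → ℝ} {c : ℝ}
    (h0 : ∀ n, 0 ≤ f n) (h : c < liminf f atTop) :
    ∀ᶠ n in atTop, c < f n := by
  rw [liminf_eq] at h
  obtain ⟨a, ha, hca⟩ := exists_lt_of_lt_csSup
    (s := {a : ℝ | ∀ᶠ n in atTop, a ≤ f n}) ⟨0, Filter.Eventually.of_forall h0⟩ h
  exact ha.mono fun n hn => lt_of_lt_of_le hca hn

lemma seqEquiv_symm {a : X} {x y : ℕ → X} (h : SeqEquiv a x y) : SeqEquiv a y x := by
  refine Filter.tendsto_atTop.2 fun C => ?_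
  obtain ⟨N, hN⟩ := Filter.eventually_atTop.1 (Filter.tendsto_atTop.1 h C)
  refine Filter.eventually_atTop.2 ⟨N.swap, fun p hp => ?_⟩
  rw [Prod.le_def] at hp
  have := hN ⟨p.2, p.1⟩ (Prod.le_def.2 ⟨hp.2, hp.1⟩)
  rwa [gp_comm]

lemma seqEquiv_trans (hX : IsDeltaHyperbolic X δ) {a : X} {x y z : ℕ → X}
    (h1 : SeqEquiv a x y) (h2 : SeqEquiv a y z) : SeqEquiv a x z := by
  refine Filter.tendsto_atTop.2 fun C => ?_
  obtain ⟨N, hN⟩ := Filter.eventually_atTop.1 (Filter.tendsto_atTop.1 h1 (C + δ/4))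
  obtain ⟨M, hM⟩ := Filter.eventually_atTop.1 (Filter.tendsto_atTop.1 h2 (C + δ/4))
  refine Filter.eventually_atTop.2 ⟨(N.1, M.2), fun p hp => ?_⟩
  rw [Prod.le_def] at hp
  set j := max N.2 M.1 with hj
  have hx := hN ⟨p.1, j⟩ (Prod.le_def.2 ⟨hp.1, le_max_left _ _⟩)
  have hz := hM ⟨j, p.2⟩ (Prod.le_def.2 ⟨le_max_right _ _, hp.2⟩)
  have := hX (x p.1) (z p.2) (y j) a
  have hmin : C + δ/4 ≤ min (gp a (x p.1) (y j)) (gp a (y j) (z p.2)) := le_min hx hz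
  linarith [this, hmin]

set_option maxHeartbeats 1000000 in
lemma seqEquiv_of_bpt_eq (hX : IsDeltaHyperbolic X δ) {a : X} {x y : ℕ → X}
    {hx : ConvSeq a x} {hy : ConvSeq a y} (h : bpt a x hx = bpt a y hy) :
    SeqEquiv a x y := by
  have h0 : Quot.mk (fun s t : BSeq a => SeqEquiv a s.1 t.1) ⟨x, hx⟩ =
      Quot.mk (fun s t : BSeq a => SeqEquiv a s.1 t.1) ⟨y, hy⟩ := h
  have h' : Relation.EqvGen (fun s t : BSeq a => SeqEquiv a s.1 t.1)
      ⟨x, hx⟩ ⟨y, hy⟩ := Quot.eq.1 h0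
  have key : ∀ u v : BSeq a,
      Relation.EqvGen (fun s t : BSeq a => SeqEquiv a s.1 t.1) u v → SeqEquiv a u.1 v.1 := by
    intro u v huv
    induction huv with
    | rel _ _ h => exact h
    | refl u => exact u.2
    | symm _ _ _ ih => exact seqEquiv_symm ih
    | trans _ _ _ _ _ ih1 ih2 => exact seqEquiv_trans hX ih1 ih2
  exact key _ _ h'

lemma gpBoundary_nonneg (a : X) (p q : Boundary a) : (0 : EReal) ≤ gpBoundary a p q := by
  refine le_sInf ?_
  rintro e ⟨u, v, hu, hv, _, _, rfl⟩
  have h := le_liminf_coe (f := fun i => gp a (u i) (v i)) (R := 0)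
    (Filter.Eventually.of_forall fun n => gp_nonneg a (u n) (v n))
  simpa using h

lemma gpBoundary_ge (hX : IsDeltaHyperbolic X δ) (hδ : 0 ≤ δ) {a : X}
    {p q : Boundary a} {ξ ζ : ℝ → X}
    (hp : RayRepresents a ξ p) (hq : RayRepresents a ζ q) {R : ℝ}
    (h : ∀ᶠ n : ℕ in atTop, R ≤ gp a (ξ n) (ζ n)) :
    ((R - δ/2 : ℝ) : EReal) ≤ gpBoundary a p q := by
  obtain ⟨hξc, hξp⟩ := hp
  obtain ⟨hζc, hζq⟩ := hq
  refine le_sInf ?_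
  rintro e ⟨u, v, hu, hv, hup, hvq, rfl⟩
  have h1 : SeqEquiv a u (fun n : ℕ => ξ n) := seqEquiv_of_bpt_eq hX (hup.trans hξp.symm)
  have h2 : SeqEquiv a v (fun n : ℕ => ζ n) := seqEquiv_of_bpt_eq hX (hvq.trans hζq.symm)
  obtain ⟨N, hN⟩ := Filter.eventually_atTop.1 (Filter.tendsto_atTop.1 h1 R)
  obtain ⟨M, hM⟩ := Filter.eventually_atTop.1 (Filter.tendsto_atTop.1 h2 R)
  obtain ⟨K, hK⟩ := Filter.eventually_atTop.1 h
  set n₀ := max (max N.2 M.2) K with hn₀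
  refine le_liminf_coe ?_
  filter_upwards [eventually_ge_atTop (max n₀ (max N.1 M.1))] with i hi
  have hiN : N.1 ≤ i := le_trans (le_trans (le_max_left _ _) (le_max_right _ _)) hi
  have hiM : M.1 ≤ i := le_trans (le_trans (le_max_right _ _) (le_max_right _ _)) hi
  have e1 : R ≤ gp a (u i) (ξ n₀) :=
    hN ⟨i, n₀⟩ (Prod.le_def.2 ⟨hiN, le_trans (le_max_left _ _) (le_max_left _ _)⟩)
  have e2 : R ≤ gp a (v i) (ζ n₀) :=
    hM ⟨i, n₀⟩ (Prod.le_def.2 ⟨hiM, le_trans (le_max_right _ _) (le_max_left _ _)⟩)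
  have e3 : R ≤ gp a (ξ n₀) (ζ n₀) := hK n₀ (le_max_right _ _)
  have hstep := hyp2 hX hδ a (u i) (ξ n₀) (ζ n₀) (v i)
  have e2' : R ≤ gp a (ζ n₀) (v i) := by rwa [gp_comm]
  have hmin : R ≤ min (gp a (u i) (ξ n₀)) (min (gp a (ξ n₀) (ζ n₀)) (gp a (ζ n₀) (v i))) :=
    le_min e1 (le_min e3 e2')
  linarith [hstep, hmin]

lemma negPow_nonneg {K : ℝ} (hK : 0 < K) (e : EReal) : 0 ≤ negPow K e := by
  unfold negPow
  split_ifs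
  · exact le_refl 0
  · exact le_refl 0
  · exact Real.rpow_nonneg hK.le _

lemma gp_ray_points (hY : IsDeltaHyperbolic Y δ) (hδ : 0 ≤ δ) {b : Y} {η₁ η₂ : ℝ → Y}
    (h1 : IsRay η₁ b) (h2 : IsRay η₂ b) {s t r : ℝ} (hs : 0 ≤ s) (ht : 0 ≤ t)
    (hr : ((r : ℝ) : EReal) ≤ liminf (fun n : ℕ => ((gp b (η₁ n) (η₂ n) : ℝ) : EReal)) atTop) :
    min (min s t) r - δ/2 ≤ gp b (η₁ s) (η₂ t) := by
  have key : ∀ ε : ℝ, 0 < ε → min (min s t) r - δ/2 ≤ gp b (η₁ s) (η₂ t) + ε := by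
    intro ε hε
    have h' : ((r - ε : ℝ) : EReal) <
        liminf (fun n : ℕ => ((gp b (η₁ n) (η₂ n) : ℝ) : EReal)) atTop :=
      lt_of_lt_of_le (by exact_mod_cast sub_lt_self r hε) hr
    have hev := eventually_lt_of_lt_liminf h'
    obtain ⟨n, hn1, hn2⟩ := (hev.and (eventually_ge_atTop (max ⌈s⌉₊ ⌈t⌉₊))).exists
    have hsn : s ≤ (n : ℝ) := le_trans (Nat.le_ceil s)
      (by exact_mod_cast le_trans (le_max_left _ _) hn2)
    have htn : t ≤ (n : ℝ) := le_trans (Nat.le_ceil t)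
      (by exact_mod_cast le_trans (le_max_right _ _) hn2)
    have hn0 : (0:ℝ) ≤ (n : ℝ) := Nat.cast_nonneg n
    have hG : r - ε < gp b (η₁ n) (η₂ n) := by exact_mod_cast hn1
    have hA : gp b (η₁ s) (η₁ (n:ℝ)) = s := by
      rw [ray_gp h1 hs hn0, min_eq_left hsn]
    have hB : gp b (η₂ (n:ℝ)) (η₂ t) = t := by
      rw [ray_gp h2 hn0 ht, min_eq_right htn]
    have hstep := hyp2 hY hδ b (η₁ s) (η₁ (n:ℝ)) (η₂ (n:ℝ)) (η₂ t)
    rw [hA, hB] at hstep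
    have hmin : min (min s t) (r - ε) ≤ min s (min (gp b (η₁ (n:ℝ)) (η₂ (n:ℝ))) t) := by
      refine le_min ?_ (le_min ?_ ?_)
      · exact le_trans (min_le_left _ _) (min_le_left _ _)
      · exact le_trans (min_le_right _ _) hG.le
      · exact le_trans (min_le_left _ _) (min_le_right _ _)
    have hmin2 : min (min s t) r - ε ≤ min (min s t) (r - ε) := by
      refine le_min ?_ ?_
      · linarith [min_le_left (min s t) r]
      · linarith [min_le_right (min s t) r]
    linarith
  exact le_of_forall_pos_le_add key

end Helpers

section Helpers2

variable {X : Type*} [MetricSpace X] {Y : Type*} [MetricSpace Y] {δ : ℝ}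

lemma holder_transfer {a : X} {b : Y}
    {dX : Boundary a → Boundary a → ℝ} {KX CX : ℝ} (hdX : IsVisualMetric a dX KX CX)
    {dY : Boundary b → Boundary b → ℝ} {KY CY : ℝ} (hdY : IsVisualMetric b dY KY CY)
    {g : Boundary a → Boundary b} (hg : IsHolder dX dY g) :
    ∃ β c2 : ℝ, 0 < β ∧ ∀ (p q : Boundary a) (T : ℝ),
      ((T : ℝ) : EReal) ≤ gpBoundary a p q →
      ((β * T - c2 : ℝ) : EReal) ≤ gpBoundary b (g p) (g q) := by
  obtain ⟨L, α, hL, hα, hHol⟩ := hg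
  obtain ⟨hKX, hCX, hdX⟩ := hdX
  obtain ⟨hKY, hCY, hdY⟩ := hdY
  have hKXpos : (0:ℝ) < KX := lt_trans one_pos hKX
  have hKYpos : (0:ℝ) < KY := lt_trans one_pos hKY
  have hCXpos : (0:ℝ) < CX := lt_trans one_pos hCX
  have hCYpos : (0:ℝ) < CY := lt_trans one_pos hCY
  have hlogKX : 0 < Real.log KX := Real.log_pos hKX
  have hlogKY : 0 < Real.log KY := Real.log_pos hKY
  set Λ : ℝ := Real.log CY + Real.log L + α * Real.log CX with hΛ
  refine ⟨α * Real.log KX / Real.log KY, Λ / Real.log KY, by positivity, ?_⟩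
  intro p q T hT
  have he'0 : (0 : EReal) ≤ gpBoundary b (g p) (g q) := gpBoundary_nonneg b (g p) (g q)
  have he'bot : gpBoundary b (g p) (g q) ≠ ⊥ := fun hb => by
    rw [hb] at he'0; exact absurd he'0 (by simp)
  have hnpX : 0 ≤ negPow KX (gpBoundary a p q) := negPow_nonneg hKXpos _
  have hdX0 : 0 ≤ dX p q := le_trans (by positivity) (hdX p q).1
  by_cases h'top : gpBoundary b (g p) (g q) = ⊤
  · rw [h'top]; exact le_top
  have hnpe' : negPow KY (gpBoundary b (g p) (g q)) =
      Real.rpow KY (-(gpBoundary b (g p) (g q)).toReal) := by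
    unfold negPow; rw [if_neg h'top, if_neg he'bot]
  have hnpe'pos : 0 < negPow KY (gpBoundary b (g p) (g q)) := by
    rw [hnpe']; exact Real.rpow_pos_of_pos hKYpos _
  by_cases hetop : gpBoundary a p q = ⊤
  · -- then dX p q = 0, dY ≤ 0, contradiction with positivity of negPow KY
    exfalso
    have hd0 : dX p q ≤ 0 := by
      have h2 := (hdX p q).2
      rw [hetop] at h2
      simpa [negPow] using h2
    have hdx : dX p q = 0 := le_antisymm hd0 hdX0
    have hdY0 : dY (g p) (g q) ≤ 0 := by
      have hh := hHol p q
      rw [hdx] at hh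
      have h0 : Real.rpow (0:ℝ) α = 0 := Real.zero_rpow hα.ne'
      rw [h0, mul_zero] at hh
      exact hh
    have h1 := (hdY (g p) (g q)).1
    have : negPow KY (gpBoundary b (g p) (g q)) ≤ 0 := by
      have := le_trans h1 hdY0
      calc negPow KY (gpBoundary b (g p) (g q))
          = CY * (negPow KY (gpBoundary b (g p) (g q)) / CY) := by field_simp
        _ ≤ CY * 0 := by
            exact mul_le_mul_of_nonneg_left (le_trans h1 hdY0) hCYpos.le
        _ = 0 := by ring
    linarith
  · have hebot : gpBoundary a p q ≠ ⊥ := fun hb => by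
      rw [hb] at hT; exact absurd hT (by simp)
    have hTe : T ≤ (gpBoundary a p q).toReal := by
      have := EReal.toReal_le_toReal hT (by simp) hetop
      simpa using this
    have hnpe : negPow KX (gpBoundary a p q) =
        Real.rpow KX (-(gpBoundary a p q).toReal) := by
      unfold negPow; rw [if_neg hetop, if_neg hebot]
    have h1 : negPow KX (gpBoundary a p q) ≤ Real.rpow KX (-T) := by
      rw [hnpe]
      exact Real.rpow_le_rpow_of_exponent_le hKX.le (by linarith)
    have hZpos : 0 < CX * Real.rpow KX (-T) := by
      have := Real.rpow_pos_of_pos hKXpos (-T); positivity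
    have hdXle : dX p q ≤ CX * Real.rpow KX (-T) :=
      le_trans (hdX p q).2 (mul_le_mul_of_nonneg_left h1 hCXpos.le)
    have hdYle : dY (g p) (g q) ≤ L * Real.rpow (CX * Real.rpow KX (-T)) α :=
      le_trans (hHol p q)
        (mul_le_mul_of_nonneg_left (Real.rpow_le_rpow hdX0 hdXle hα.le) hL.le)
    have key : Real.rpow KY (-(gpBoundary b (g p) (g q)).toReal) ≤
        CY * (L * Real.rpow (CX * Real.rpow KX (-T)) α) := by
      have h2 := (hdY (g p) (g q)).1
      rw [hnpe'] at h2
      calc Real.rpow KY (-(gpBoundary b (g p) (g q)).toReal)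
          = CY * (Real.rpow KY (-(gpBoundary b (g p) (g q)).toReal) / CY) := by field_simp
        _ ≤ CY * (L * Real.rpow (CX * Real.rpow KX (-T)) α) :=
            mul_le_mul_of_nonneg_left (le_trans h2 hdYle) hCYpos.le
    have hrpos : 0 < Real.rpow (CX * Real.rpow KX (-T)) α := Real.rpow_pos_of_pos hZpos _
    have hRHSpos : 0 < CY * (L * Real.rpow (CX * Real.rpow KX (-T)) α) := by positivity
    have hlog := Real.log_le_log (Real.rpow_pos_of_pos hKYpos _) key
    rw [Real.log_rpow hKYpos] at hlog
    have hlogRHS : Real.log (CY * (L * Real.rpow (CX * Real.rpow KX (-T)) α)) =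
        Λ + (-T) * α * Real.log KX := by
      have e1 : Real.log (Real.rpow (CX * Real.rpow KX (-T)) α) =
          α * Real.log (CX * Real.rpow KX (-T)) := Real.log_rpow hZpos _
      have e2 : Real.log (Real.rpow KX (-T)) = -T * Real.log KX := Real.log_rpow hKXpos _
      rw [Real.log_mul hCYpos.ne' (by positivity), Real.log_mul hL.ne' hrpos.ne',
        e1, Real.log_mul hCXpos.ne' (show Real.rpow KX (-T) ≠ 0 from (Real.rpow_pos_of_pos hKXpos (-T)).ne'), e2]
      rw [hΛ]; ring
    rw [hlogRHS] at hlog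
    have hfinal : α * Real.log KX / Real.log KY * T - Λ / Real.log KY ≤
        (gpBoundary b (g p) (g q)).toReal := by
      have heq : α * Real.log KX / Real.log KY * T - Λ / Real.log KY =
          (α * T * Real.log KX - Λ) / Real.log KY := by ring
      rw [heq, div_le_iff₀ hlogKY]
      nlinarith [hlog]
    calc ((α * Real.log KX / Real.log KY * T - Λ / Real.log KY : ℝ) : EReal)
        ≤ (((gpBoundary b (g p) (g q)).toReal : ℝ) : EReal) := EReal.coe_le_coe_iff.2 hfinal
      _ = gpBoundary b (g p) (g q) := EReal.coe_toReal h'top he'bot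

lemma extension_props (hX : IsDeltaHyperbolic X δ) (hδ : 0 ≤ δ)
    {a : X} {b : Y} {g : Boundary a → Boundary b} {A D : ℝ} (hD : 0 < D)
    {f : X → Y} (hf : IsRadialExtension a b g A D f) (x : X) (hx : x ≠ a) :
    ∃ (ξ : ℝ → X) (η : ℝ → Y) (p : Boundary a), IsRay ξ a ∧ IsRay η b ∧
      RayRepresents a ξ p ∧ RayRepresents b η (g p) ∧ f x = η (A * dist x a) ∧
      ∀ᶠ n : ℕ in atTop, dist x a - D - δ/4 ≤ gp a x (ξ n) := by
  obtain ⟨hfa, h2⟩ := hf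
  obtain ⟨hray, hmax⟩ := h2 x hx
  by_cases hex : ∃ (ξ : ℝ → X) (t : ℝ), IsRay ξ a ∧ 0 ≤ t ∧ ξ t = x
  · obtain ⟨ξ, t, η, hξ, ht, hξt, hη, ⟨p, hp, hgp⟩, hfx⟩ := hray hex
    have hdx : dist x a = t := by rw [← hξt]; exact ray_dist hξ ht
    refine ⟨ξ, η, p, hξ, hη, hp, hgp, by rw [hfx, hdx], ?_⟩
    filter_upwards [eventually_ge_atTop ⌈t⌉₊] with n hn
    have htn : t ≤ (n : ℝ) := le_trans (Nat.le_ceil t) (by exact_mod_cast hn)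
    have : gp a x (ξ (n:ℝ)) = t := by
      rw [← hξt, ray_gp hξ ht (Nat.cast_nonneg n), min_eq_left htn]
    rw [this, hdx]; linarith
  · obtain ⟨M, t, ζ, ξ, η, ⟨hζ, _⟩, htI, hζt, hξ, hgpr, hη, ⟨p, hp, hgp⟩, hfx⟩ := hmax hex
    have hM0 : 0 ≤ M := le_trans htI.1 htI.2
    have hIccM : M ∈ Icc (0:ℝ) M := ⟨hM0, le_refl M⟩
    have hIcc0 : (0:ℝ) ∈ Icc (0:ℝ) M := ⟨le_refl 0, hM0⟩
    have hdx : dist x a = t := by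
      rw [← hζt, ← hζ.1]
      rw [hζ.2 t htI 0 hIcc0]
      rw [abs_of_nonneg (by linarith [htI.1])]; ring
    have hdw : dist (ζ M) a = M := by
      rw [← hζ.1, hζ.2 M hIccM 0 hIcc0, abs_of_nonneg (by linarith)]; ring
    have hxw : dist x (ζ M) = M - t := by
      rw [← hζt, hζ.2 t htI M hIccM, abs_of_nonpos (by linarith [htI.2])]; ring
    have hgxw : gp a x (ζ M) = t := by
      unfold gp; rw [hdx, hdw, hxw]; ring
    refine ⟨ξ, η, p, hξ, hη, hp, hgp, by rw [hfx, hdx], ?_⟩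
    have hev : ∀ᶠ n : ℕ in atTop, M - D < gp a (ζ M) (ξ n) := by
      apply eventually_lt_of_lt_liminf_real
        (fun n => gp_nonneg a (ζ M) (ξ n))
      rw [hdw] at hgpr
      exact hgpr
    filter_upwards [hev] with n hn
    have hstep := hX x (ξ (n:ℝ)) (ζ M) a
    have hmin : min t (M - D) - δ/4 ≤ gp a x (ξ (n:ℝ)) := by
      have : min t (M - D) ≤ min (gp a x (ζ M)) (gp a (ζ M) (ξ (n:ℝ))) :=
        min_le_min (le_of_eq hgxw.symm) hn.le
      linarith [hstep]
    have : t - D ≤ min t (M - D) := le_min (by linarith [hD]) (by linarith [htI.2])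
    rw [hdx]; linarith

lemma dist_f_basepoint (hX : IsDeltaHyperbolic X δ) (hδ : 0 ≤ δ)
    {a : X} {b : Y} {g : Boundary a → Boundary b} {A D : ℝ} (hD : 0 < D) (hA : 0 < A)
    {f : X → Y} (hf : IsRadialExtension a b g A D f) (z : X) :
    dist (f z) b = A * dist z a := by
  by_cases hz : z = a
  · subst hz; rw [hf.1]; simp
  · obtain ⟨ξ, η, p, hξ, hη, hp, hgp, hfz, hev⟩ := extension_props hX hδ hD hf z hz
    rw [hfz, ray_dist hη (by positivity)]

end Helpers2

/-- if `g : ∂X → ∂Y` is Hölder and `X` is visual, then there is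
`M > 0` such that each radial extension of `g` with parameter `A ≤ M` is a
radial function. -/
theorem stmt6 {X : Type*} [MetricSpace X] [ProperSpace X]
    {Y : Type*} [MetricSpace Y] [ProperSpace Y]
    (δ : ℝ) (hX : IsDeltaHyperbolic X δ) (hY : IsDeltaHyperbolic Y δ)
    (hgX : IsGeodesicSpace X) (hgY : IsGeodesicSpace Y)
    (a : X) (b : Y) (D : ℝ) (hD : 0 < D) (hvisX : IsVisualSpace a D)
    (dX : Boundary a → Boundary a → ℝ) (KX CX : ℝ) (hdX : IsVisualMetric a dX KX CX)
    (dY : Boundary b → Boundary b → ℝ) (KY CY : ℝ) (hdY : IsVisualMetric b dY KY CY)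
    (g : Boundary a → Boundary b) (hg : IsHolder dX dY g) :
    ∃ M : ℝ, 0 < M ∧ ∀ A : ℝ, 0 < A → A ≤ M → ∀ f : X → Y,
      IsRadialExtension a b g A D f → Radial f a := by
  have hδ0 : 0 ≤ δ := delta_nonneg hX a
  obtain ⟨β, c2, hβ, htrans⟩ := holder_transfer hdX hdY hg
  refine ⟨β, hβ, ?_⟩
  intro A hA hAβ f hf
  have hdistf : ∀ z, dist (f z) b = A * dist z a := dist_f_basepoint hX hδ0 hD hA hf
  constructor
  · -- LSL
    set c4 : ℝ := max (β * (D + 3*δ/2) + c2) 0 with hc4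
    have hc40 : 0 ≤ c4 := le_max_right _ _
    refine ⟨β, 2*c4 + δ + 1, hβ, by linarith, ?_⟩
    intro x y
    by_cases hx : x = a
    · rw [hx]
      have h1 : dist (f a) (f y) = A * dist a y := by
        rw [hf.1, dist_comm b (f y), hdistf y, dist_comm y a]
      rw [h1]
      nlinarith [mul_nonneg (sub_nonneg.2 hAβ) (dist_nonneg (x := a) (y := y)), hc40, hδ0]
    by_cases hy : y = a
    · rw [hy]
      have h1 : dist (f x) (f a) = A * dist x a := by
        rw [hf.1, hdistf x]
      rw [h1]
      nlinarith [mul_nonneg (sub_nonneg.2 hAβ) (dist_nonneg (x := x) (y := a)), hc40, hδ0]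
    obtain ⟨ξx, ηx, px, hξx, hηx, hpx, hgpx, hfx, hevx⟩ := extension_props hX hδ0 hD hf x hx
    obtain ⟨ξy, ηy, py, hξy, hηy, hpy, hgpy, hfy, hevy⟩ := extension_props hX hδ0 hD hf y hy
    have hG0 : 0 ≤ gp a x y := gp_nonneg a x y
    have hGx : gp a x y ≤ dist x a := gp_le_left a x y
    have hGy : gp a x y ≤ dist y a := by rw [gp_comm]; exact gp_le_left a y x
    have hstep1 : ∀ᶠ n : ℕ in atTop, gp a x y - D - δ ≤ gp a (ξx n) (ξy n) := by
      filter_upwards [hevx, hevy] with n h1 h2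
      have hstep := hyp2 hX hδ0 a (ξx (n:ℝ)) x y (ξy (n:ℝ))
      have e1 : gp a x y - D - δ/4 ≤ gp a (ξx (n:ℝ)) x := by
        rw [gp_comm a (ξx (n:ℝ)) x]; linarith
      have hmin : gp a x y - D - δ/4 ≤
          min (gp a (ξx (n:ℝ)) x) (min (gp a x y) (gp a y (ξy (n:ℝ)))) :=
        le_min e1 (le_min (by linarith) (by linarith))
      linarith
    have hstep2 : ((gp a x y - D - δ - δ/2 : ℝ) : EReal) ≤ gpBoundary a px py :=
      gpBoundary_ge hX hδ0 hpx hpy hstep1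
    have hstep3 := htrans px py (gp a x y - D - δ - δ/2) hstep2
    obtain ⟨hcx, hbx⟩ := hgpx
    obtain ⟨hcy, hby⟩ := hgpy
    have hmem : liminf (fun n : ℕ => ((gp b (ηx n) (ηy n) : ℝ) : EReal)) atTop ∈
        {e : EReal | ∃ (u v : ℕ → Y) (hu : ConvSeq b u) (hv : ConvSeq b v),
          bpt b u hu = g px ∧ bpt b v hv = g py ∧
          e = liminf (fun i : ℕ => ((gp b (u i) (v i)) : EReal)) atTop} :=
      ⟨_, _, hcx, hcy, hbx, hby, rfl⟩
    have hstep4 : ((β * (gp a x y - D - δ - δ/2) - c2 : ℝ) : EReal) ≤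
        liminf (fun n : ℕ => ((gp b (ηx n) (ηy n) : ℝ) : EReal)) atTop :=
      le_trans hstep3 (sInf_le hmem)
    have htx : (0:ℝ) ≤ A * dist x a := by positivity
    have hty : (0:ℝ) ≤ A * dist y a := by positivity
    have hstep5 := gp_ray_points hY hδ0 hηx hηy htx hty hstep4
    have hrge : A * gp a x y - c4 ≤ β * (gp a x y - D - δ - δ/2) - c2 := by
      have h1 : β * (D + 3*δ/2) + c2 ≤ c4 := le_max_left _ _
      nlinarith [mul_nonneg (sub_nonneg.2 hAβ) hG0]
    have hgpfb : A * gp a x y - c4 - δ/2 ≤ gp b (f x) (f y) := by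
      rw [hfx, hfy]
      have hm1 : A * gp a x y - c4 ≤ min (min (A * dist x a) (A * dist y a))
          (β * (gp a x y - D - δ - δ/2) - c2) := by
        refine le_min (le_min ?_ ?_) hrge
        · nlinarith [mul_nonneg hA.le (sub_nonneg.2 hGx)]
        · nlinarith [mul_nonneg hA.le (sub_nonneg.2 hGy)]
      linarith [hstep5]
    have hgpdef : gp b (f x) (f y) =
        (dist (f x) b + dist (f y) b - dist (f x) (f y))/2 := rfl
    have hGdef : gp a x y = (dist x a + dist y a - dist x y)/2 := rfl
    have hxy : A * dist x y = A * dist x a + A * dist y a - 2*(A * gp a x y) := by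
      rw [hGdef]; ring
    have hkey : dist (f x) (f y) ≤ A * dist x y + 2*c4 + δ := by
      have h3 : gp b (f x) (f y) =
          (A * dist x a + A * dist y a - dist (f x) (f y))/2 := by
        rw [hgpdef, hdistf x, hdistf y]
      linarith [hgpfb]
    nlinarith [mul_nonneg (sub_nonneg.2 hAβ) (dist_nonneg (x := x) (y := y))]
  · refine ⟨A, 1, hA, one_pos, ?_⟩
    intro M hM γ hγ s hs t ht
    have hds : dist (γ s) a = s := by
      have h := hγ.2 s hs 0 ⟨le_refl 0, hM⟩
      rw [hγ.1] at h
      rw [h, sub_zero, abs_of_nonneg hs.1]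
    have hdt : dist (γ t) a = t := by
      have h := hγ.2 t ht 0 ⟨le_refl 0, hM⟩
      rw [hγ.1] at h
      rw [h, sub_zero, abs_of_nonneg ht.1]
    have hst : dist (γ s) (γ t) = |s - t| := hγ.2 s hs t ht
    have habs := abs_dist_sub_le (f (γ s)) (f (γ t)) b
    rw [hdistf (γ s), hdistf (γ t), hds, hdt] at habs
    have heq : A * |s - t| = |A * s - A * t| := by
      rw [← mul_sub, abs_mul, abs_of_nonneg hA.le]
    rw [hst]
    calc A * |s - t| - 1 ≤ |A * s - A * t| := by rw [heq]; linarith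
      _ ≤ dist (f (γ s)) (f (γ t)) := habs


end Gromov
end
end
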